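/- arXiv:2003.03691 — 4 statements merged into one kernel-verified Lean document; each statement's English description precedes it below -/
import Mathlib

section
/- For K ≥ 2, the cosine of the angle between any two distinct simplex vertices w_i and w_j equals 1/(1-K); equivalently, all pairwise angles among the K simplex vertices are equal. -/
open scoped RealInnerProductSpace

/-- The angle-based simplex vertices in `ℝ^{K-1}` (0-indexed: `simplexVertex K 0` is `w_1`). -/
noncomputable def simplexVertex (K : ℕ) (j : Fin K) : EuclideanSpace ℝ (Fin (K - 1)) :=
  if (j : ℕ) = 0 then WithLp.toLp 2 (fun _ => (Real.sqrt ((K : ℝ) - 1))⁻¹)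
  else WithLp.toLp 2 (fun i => -((1 + Real.sqrt K) / (((K : ℝ) - 1) * Real.sqrt ((K : ℝ) - 1)))
      + if (i : ℕ) + 1 = (j : ℕ) then Real.sqrt ((K : ℝ) / ((K : ℝ) - 1)) else 0)

lemma sumA (n : ℕ) (a b c : ℝ) (p : Fin n) :
    ∑ x : Fin n, c * (a + if x = p then b else 0) = n * (c * a) + c * b := by
  have : ∀ x : Fin n, c * (a + if x = p then b else 0)
      = c * a + (if x = p then c * b else 0) := by
    intro x; split_ifs <;> ring
  simp only [this, Finset.sum_add_distrib, Finset.sum_const, Finset.card_univ,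
    Fintype.card_fin, nsmul_eq_mul, Finset.sum_ite_eq', Finset.mem_univ, if_true]

lemma sumB (n : ℕ) (a b : ℝ) (p q : Fin n) (hpq : p ≠ q) :
    ∑ x : Fin n, (a + if x = p then b else 0) * (a + if x = q then b else 0)
      = n * (a * a) + 2 * (a * b) := by
  have : ∀ x : Fin n, (a + if x = p then b else 0) * (a + if x = q then b else 0)
      = a * a + ((if x = p then a * b else 0) + (if x = q then a * b else 0)) := by
    intro x
    split_ifs with h1 h2
    · exact absurd (h1 ▸ h2 ▸ rfl : p = q) hpq
    all_goals ring
  simp only [this, Finset.sum_add_distrib, Finset.sum_const, Finset.card_univ,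
    Fintype.card_fin, nsmul_eq_mul, Finset.sum_ite_eq', Finset.mem_univ, if_true]
  ring

lemma sumC (n : ℕ) (a b : ℝ) (p : Fin n) :
    ∑ x : Fin n, (a + if x = p then b else 0) * (a + if x = p then b else 0)
      = n * (a * a) + 2 * (a * b) + b * b := by
  have : ∀ x : Fin n, (a + if x = p then b else 0) * (a + if x = p then b else 0)
      = a * a + (if x = p then 2 * (a * b) + b * b else 0) := by
    intro x; split_ifs <;> ring
  simp only [this, Finset.sum_add_distrib, Finset.sum_const, Finset.card_univ,
    Fintype.card_fin, nsmul_eq_mul, Finset.sum_ite_eq', Finset.mem_univ, if_true]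
  ring

lemma simplexVertex_of_ne (K : ℕ) (hK : 2 ≤ K) (j : Fin K) (hj : (j : ℕ) ≠ 0) :
    simplexVertex K j = WithLp.toLp 2 fun x : Fin (K - 1) =>
      -((1 + Real.sqrt K) / (((K : ℝ) - 1) * Real.sqrt ((K : ℝ) - 1)))
        + if x = (⟨(j : ℕ) - 1, by omega⟩ : Fin (K - 1))
            then Real.sqrt ((K : ℝ) / ((K : ℝ) - 1)) else 0 := by
  ext x
  simp only [simplexVertex, hj, if_false]
  congr 1
  have : ((x : ℕ) + 1 = (j : ℕ)) ↔ (x = (⟨(j : ℕ) - 1, by omega⟩ : Fin (K - 1))) := by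
    rw [Fin.ext_iff]
    simp only []
    omega
  simp only [this]

lemma simplexVertex_inner (K : ℕ) (hK : 2 ≤ K) (i j : Fin K) :
    ⟪simplexVertex K i, simplexVertex K j⟫
      = if i = j then 1 else 1 / (1 - (K : ℝ)) := by
  have hr : (0:ℝ) < (K:ℝ) - 1 := by
    have : (2:ℝ) ≤ (K:ℝ) := by exact_mod_cast hK
    linarith
  set sr := Real.sqrt ((K:ℝ) - 1) with hsr_def
  set sk := Real.sqrt (K:ℝ) with hsk_def
  have hsr2 : sr ^ 2 = (K:ℝ) - 1 := Real.sq_sqrt hr.le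
  have hsrpos : 0 < sr := Real.sqrt_pos.2 hr
  have hsk2 : sk ^ 2 = (K:ℝ) := Real.sq_sqrt (by positivity)
  have hdiv : Real.sqrt ((K : ℝ) / ((K : ℝ) - 1)) = sk / sr := by
    rw [Real.sqrt_div (by positivity)]
  have hcard : ((K - 1 : ℕ) : ℝ) = (K:ℝ) - 1 := by
    push_cast [Nat.cast_sub (by omega : 1 ≤ K)]; ring
  have hinner : ⟪simplexVertex K i, simplexVertex K j⟫
      = ∑ x : Fin (K-1), simplexVertex K i x * simplexVertex K j x := by
    simp [PiLp.inner_apply, RCLike.inner_apply, conj_trivial, mul_comm]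
  rw [hinner]
  rcases Nat.eq_zero_or_pos (i : ℕ) with hi | hi
  · rcases Nat.eq_zero_or_pos (j : ℕ) with hj | hj
    · -- i = j = 0
      have hij : i = j := Fin.ext (by omega)
      simp only [hij, if_true, simplexVertex, hj, if_true]
      rw [Finset.sum_const, Finset.card_univ, Fintype.card_fin, nsmul_eq_mul, hcard]
      field_simp
      exact (Real.sq_sqrt hr.le).symm
    · -- i = 0, j ≠ 0
      have hij : ¬ (i = j) := by intro h; rw [h] at hi; omega
      simp only [hij, if_false]
      rw [simplexVertex_of_ne K hK j (by omega)]
      simp only [simplexVertex, hi, if_true]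
      rw [sumA, hcard, hdiv]
      have h1 : (1:ℝ) - (K:ℝ) = -(sr^2) := by linarith [hsr2]
      simp only [← hsr_def, ← hsk_def]
      rw [h1, ← hsr2]
      field_simp
      ring
  · rcases Nat.eq_zero_or_pos (j : ℕ) with hj | hj
    · -- i ≠ 0, j = 0
      have hij : ¬ (i = j) := by intro h; rw [h] at hi; omega
      simp only [hij, if_false]
      rw [simplexVertex_of_ne K hK i (by omega)]
      simp only [simplexVertex, hj, if_true]
      have hcomm : ∀ x : Fin (K-1),
          (-((1 + sk) / (((K : ℝ) - 1) * sr))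
            + if x = (⟨(i : ℕ) - 1, by omega⟩ : Fin (K - 1))
                then Real.sqrt ((K : ℝ) / ((K : ℝ) - 1)) else 0) * sr⁻¹
          = sr⁻¹ * (-((1 + sk) / (((K : ℝ) - 1) * sr))
            + if x = (⟨(i : ℕ) - 1, by omega⟩ : Fin (K - 1))
                then Real.sqrt ((K : ℝ) / ((K : ℝ) - 1)) else 0) := by
        intro x; ring
      simp only [← hsr_def, ← hsk_def]
      simp only [hcomm]
      rw [sumA, hcard, hdiv]
      have h1 : (1:ℝ) - (K:ℝ) = -(sr^2) := by linarith [hsr2]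
      rw [h1, ← hsr2]
      field_simp
      ring
    · -- i ≠ 0, j ≠ 0
      rw [simplexVertex_of_ne K hK i (by omega), simplexVertex_of_ne K hK j (by omega)]
      by_cases hij : i = j
      · simp only [hij, if_true]
        rw [sumC, hcard, hdiv]
        have h1 : (K:ℝ) = sr^2 + 1 := by linarith [hsr2]
        have h2 : sk^2 = sr^2 + 1 := by rw [hsk2]; exact h1
        simp only [← hsr_def, ← hsk_def]
        rw [← hsr2]
        field_simp
        ring_nf
        linear_combination (-1 + sr^2) * h2
      · have hpq : (⟨(i : ℕ) - 1, by omega⟩ : Fin (K - 1))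
            ≠ (⟨(j : ℕ) - 1, by omega⟩ : Fin (K - 1)) := by
          intro h
          apply hij
          rw [Fin.ext_iff] at h ⊢
          simp only [] at h
          omega
        simp only [hij, if_false]
        rw [sumB _ _ _ _ _ hpq, hcard, hdiv]
        have h1 : (1:ℝ) - (K:ℝ) = -(sr^2) := by linarith [hsr2]
        have h2 : sk^2 = sr^2 + 1 := by rw [hsk2]; linarith [hsr2]
        simp only [← hsr_def, ← hsk_def]
        rw [h1, ← hsr2]
        field_simp
        ring_nf
        linear_combination (-1) * h2

lemma simplexVertex_norm (K : ℕ) (hK : 2 ≤ K) (i : Fin K) :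
    ‖simplexVertex K i‖ = 1 := by
  have h := simplexVertex_inner K hK i i
  simp only [if_true, if_pos rfl] at h
  have h2 : ‖simplexVertex K i‖ * ‖simplexVertex K i‖ = 1 := by
    rw [← real_inner_self_eq_norm_mul_norm, h]
  nlinarith [norm_nonneg (simplexVertex K i)]

theorem simplexVertex_cos_angle (K : ℕ) (hK : 2 ≤ K) (i j : Fin K) (hij : i ≠ j) :
    ⟪simplexVertex K i, simplexVertex K j⟫ / (‖simplexVertex K i‖ * ‖simplexVertex K j‖)
      = 1 / (1 - (K : ℝ)) := by
  rw [simplexVertex_inner K hK i j, simplexVertex_norm K hK i, simplexVertex_norm K hK j,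
    if_neg hij]
  norm_num
end

section
/- (Fisher consistency of angle-based cost-sensitive loss) Suppose ℓ: ℝ → ℝ is convex, differentiable, and ℓ'(z) < 0 for all z. Let C ∈ ℝ^{K×K} have nonnegative entries with C_{jj} = 0, and let P_1, …, P_K ≥ 0 with ∑_j P_j = 1. If f* ∈ ℝ^{K-1} minimizes the risk R(f) = ∑_{j=1}^K ∑_{t=1}^K C_{j,t} P_j ℓ(-⟨w_t, f⟩), then for any indices k, k' with ∑_j C_{j,k} P_j < ∑_j C_{j,k'} P_j, it holds that ⟨w_k, f*⟩ > ⟨w_{k'}, f*⟩. -/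
open scoped RealInnerProductSpace

/-- Fisher consistency of the angle-based cost-sensitive loss. -/
theorem fisher_consistency_angle_based (K : ℕ) (hK : 2 ≤ K)
    (w : Fin K → EuclideanSpace ℝ (Fin (K - 1)))
    (hnorm : ∀ j, ‖w j‖ = 1)
    (hinner : ∀ i j : Fin K, i ≠ j → ⟪w i, w j⟫ = -1 / ((K : ℝ) - 1))
    (hsum : ∑ j : Fin K, w j = 0)
    (ℓ : ℝ → ℝ) (hconv : ConvexOn ℝ Set.univ ℓ) (hdiff : Differentiable ℝ ℓ)
    (hderiv : ∀ z : ℝ, deriv ℓ z < 0)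
    (C : Fin K → Fin K → ℝ) (hC : ∀ j t, 0 ≤ C j t) (hCdiag : ∀ j, C j j = 0)
    (P : Fin K → ℝ) (hP : ∀ j, 0 ≤ P j) (hPsum : ∑ j : Fin K, P j = 1)
    (fstar : EuclideanSpace ℝ (Fin (K - 1)))
    (hmin : ∀ f : EuclideanSpace ℝ (Fin (K - 1)),
      ∑ j : Fin K, ∑ t : Fin K, C j t * P j * ℓ (-⟪w t, fstar⟫)
        ≤ ∑ j : Fin K, ∑ t : Fin K, C j t * P j * ℓ (-⟪w t, f⟫))
    (k k' : Fin K)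
    (hkk' : ∑ j : Fin K, C j k * P j < ∑ j : Fin K, C j k' * P j) :
    ⟪w k, fstar⟫ > ⟪w k', fstar⟫ := by
  have hK1 : (1:ℝ) ≤ (K:ℝ) - 1 := by
    have : (2:ℝ) ≤ (K:ℝ) := by exact_mod_cast hK
    linarith
  have hkne : k ≠ k' := by
    rintro rfl; exact lt_irrefl _ hkk'
  set d : EuclideanSpace ℝ (Fin (K-1)) := w k - w k' with hd
  set M : ℝ := 1 + 1/((K:ℝ)-1) with hM
  have hKne : (0:ℝ) < (K:ℝ) - 1 := by linarith
  have hMpos : 0 < M := by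
    have h2 := div_pos one_pos hKne
    rw [hM]; linarith
  have hself : ∀ t, ⟪w t, w t⟫ = (1:ℝ) := by
    intro t
    rw [real_inner_self_eq_norm_sq, hnorm]; norm_num
  have hwd : ∀ t : Fin K, ⟪w t, d⟫ = if t = k then M else if t = k' then -M else 0 := by
    intro t
    rw [hd, inner_sub_right]
    by_cases h1 : t = k
    · subst h1
      rw [hself, hinner t k' hkne, if_pos rfl, hM]
      ring
    · by_cases h2 : t = k'
      · subst h2
        rw [hself, hinner t k h1, if_neg h1, if_pos rfl, hM]
        ring
      · rw [hinner t k h1, hinner t k' h2, if_neg h1, if_neg h2]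
        ring
  -- the one-dimensional function
  set g : ℝ → ℝ := fun ε => ∑ j : Fin K, ∑ t : Fin K, C j t * P j * ℓ (-⟪w t, fstar + ε • d⟫)
    with hg
  have hinner_eps : ∀ (t : Fin K) (ε : ℝ), ⟪w t, fstar + ε • d⟫ = ⟪w t, fstar⟫ + ε * ⟪w t, d⟫ := by
    intro t ε
    rw [inner_add_right, real_inner_smul_right]
  set D : ℝ := ∑ j : Fin K, ∑ t : Fin K,
      C j t * P j * (deriv ℓ (-⟪w t, fstar⟫) * (-⟪w t, d⟫)) with hD
  have hgderiv : HasDerivAt g D 0 := by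
    rw [hg, hD]
    apply HasDerivAt.fun_sum
    intro j _
    apply HasDerivAt.fun_sum
    intro t _
    have h1 : HasDerivAt (fun ε : ℝ => -⟪w t, fstar + ε • d⟫) (-⟪w t, d⟫) 0 := by
      have : (fun ε : ℝ => -⟪w t, fstar + ε • d⟫)
          = fun ε : ℝ => -⟪w t, fstar⟫ + ε * (-⟪w t, d⟫) := by
        funext ε; rw [hinner_eps]; ring
      rw [this]
      simpa using ((hasDerivAt_id (0:ℝ)).mul_const (-⟪w t, d⟫)).const_add (-⟪w t, fstar⟫)
    have h2 : HasDerivAt (fun ε : ℝ => ℓ (-⟪w t, fstar + ε • d⟫))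
        (deriv ℓ (-⟪w t, fstar + (0:ℝ) • d⟫) * (-⟪w t, d⟫)) 0 :=
      (hdiff _).hasDerivAt.comp 0 h1
    have h3 : -⟪w t, fstar + (0:ℝ) • d⟫ = -⟪w t, fstar⟫ := by
      rw [hinner_eps]; ring
    rw [h3] at h2
    exact h2.const_mul _
  have hmin0 : ∀ ε : ℝ, g 0 ≤ g ε := by
    intro ε
    have h0 : g 0 = ∑ j : Fin K, ∑ t : Fin K, C j t * P j * ℓ (-⟪w t, fstar⟫) := by
      simp only [hg, zero_smul, add_zero]
    rw [h0]
    exact hmin _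
  have hD0 : D = 0 := by
    have : IsLocalMin g 0 := by
      apply IsMinOn.isLocalMin (by intro x _; exact hmin0 x)
      exact Filter.univ_mem
    exact this.hasDerivAt_eq_zero hgderiv
  -- rewrite D
  set a : ℝ := ⟪w k, fstar⟫ with ha
  set b : ℝ := ⟪w k', fstar⟫ with hb
  set A : ℝ := ∑ j : Fin K, C j k * P j with hA
  set B : ℝ := ∑ j : Fin K, C j k' * P j with hB
  have hDval : D = A * (deriv ℓ (-a) * (-M)) + B * (deriv ℓ (-b) * M) := by
    rw [hD]
    have : ∀ j : Fin K, ∑ t : Fin K, C j t * P j * (deriv ℓ (-⟪w t, fstar⟫) * (-⟪w t, d⟫))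
        = C j k * P j * (deriv ℓ (-a) * (-M)) + C j k' * P j * (deriv ℓ (-b) * M) := by
      intro j
      rw [Finset.sum_eq_add_of_mem k k' (Finset.mem_univ _) (Finset.mem_univ _) hkne ?_]
      · rw [hwd k, hwd k']
        simp [hkne, Ne.symm hkne, ha, hb]
      · intro t _ ht
        rw [hwd t]
        simp [ht.1, ht.2]
    rw [Finset.sum_congr rfl (fun j _ => this j), Finset.sum_add_distrib,
      ← Finset.sum_mul, ← Finset.sum_mul, ← hA, ← hB]
  have heq : A * deriv ℓ (-a) = B * deriv ℓ (-b) := by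
    rw [hDval] at hD0
    have hMne : M ≠ 0 := ne_of_gt hMpos
    nlinarith [hD0]
  have hAnonneg : 0 ≤ A := Finset.sum_nonneg fun j _ => mul_nonneg (hC j k) (hP j)
  have hda : deriv ℓ (-a) < 0 := hderiv _
  have hdb : deriv ℓ (-b) < 0 := hderiv _
  by_contra hcon
  push_neg at hcon
  -- a ≤ b, so -b ≤ -a, so deriv ℓ (-b) ≤ deriv ℓ (-a)
  have hmono : deriv ℓ (-b) ≤ deriv ℓ (-a) := by
    have := hconv.monotoneOn_deriv (fun x _ => hdiff.differentiableAt)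
    exact this (Set.mem_univ _) (Set.mem_univ _) (by linarith)
  nlinarith
end

section
/- (Exponential loss inversion) Suppose ℓ(z) = e^{-z}, costs are cost-insensitive (C_{j,t} = 𝟙(j≠t)), P_t ∈ (0,1) for all t with ∑_t P_t = 1, and f* satisfies P_t = 1 + (1-K)e^{-⟨w_t,f*⟩}/∑_k e^{-⟨w_k,f*⟩} together with ∑_t ⟨w_t, f*⟩ = 0. Then for each t: ⟨w_t, f*⟩ = (1/K)∑_{k=1}^K log(1 - P_k) - log(1 - P_t). -/
open scoped RealInnerProductSpace

/-- Exponential-loss inversion: expressing `⟪w_t, f*⟫` in terms of the class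
probabilities in the cost-insensitive case. -/
theorem exp_loss_inversion (K : ℕ) (hK : 2 ≤ K)
    (w : Fin K → EuclideanSpace ℝ (Fin (K - 1)))
    (hwsum : ∑ t : Fin K, w t = 0)
    (P : Fin K → ℝ) (hP : ∀ t, P t ∈ Set.Ioo (0 : ℝ) 1)
    (hPsum : ∑ t : Fin K, P t = 1)
    (fstar : EuclideanSpace ℝ (Fin (K - 1)))
    (hprob : ∀ t : Fin K,
      P t = 1 + ((1 - (K : ℝ)) * Real.exp (-⟪w t, fstar⟫))
        / ∑ k : Fin K, Real.exp (-⟪w k, fstar⟫))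
    (hzero : ∑ t : Fin K, ⟪w t, fstar⟫ = 0) :
    ∀ t : Fin K,
      ⟪w t, fstar⟫ = (1 / (K : ℝ)) * (∑ k : Fin K, Real.log (1 - P k))
        - Real.log (1 - P t) := by
  set a : Fin K → ℝ := fun t => ⟪w t, fstar⟫ with ha
  set S : ℝ := ∑ k : Fin K, Real.exp (-a k) with hSdef
  have hKpos : (0:ℝ) < (K:ℝ) := by positivity
  have hK1 : (0:ℝ) < (K:ℝ) - 1 := by
    have : (2:ℝ) ≤ (K:ℝ) := by exact_mod_cast hK
    linarith
  have hS : 0 < S := by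
    apply Finset.sum_pos
    · intro i _; exact Real.exp_pos _
    · have : 0 < K := by omega
      exact ⟨⟨0, this⟩, Finset.mem_univ _⟩
  have h1 : ∀ t, 1 - P t = ((K:ℝ) - 1) * Real.exp (-a t) / S := by
    intro t
    rw [hprob t]
    simp only [ha]
    ring_nf
  have hlog : ∀ t, Real.log (1 - P t)
      = Real.log ((K:ℝ) - 1) + (-a t) - Real.log S := by
    intro t
    rw [h1 t, Real.log_div (by positivity) hS.ne',
      Real.log_mul hK1.ne' (Real.exp_pos _).ne', Real.log_exp]
  intro t
  have hsum : ∑ k : Fin K, Real.log (1 - P k)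
      = (K:ℝ) * (Real.log ((K:ℝ) - 1) - Real.log S) := by
    calc ∑ k : Fin K, Real.log (1 - P k)
        = ∑ k : Fin K, (Real.log ((K:ℝ) - 1) + (-a k) - Real.log S) := by
          exact Finset.sum_congr rfl fun k _ => hlog k
      _ = (K:ℝ) * (Real.log ((K:ℝ) - 1) - Real.log S) := by
          rw [Finset.sum_sub_distrib, Finset.sum_add_distrib, Finset.sum_neg_distrib,
            hzero, Finset.sum_const, Finset.sum_const, Finset.card_univ, Fintype.card_fin]
          push_cast
          ring
  rw [hsum, hlog t]
  have hid : (1/(K:ℝ)) * ((K:ℝ) * (Real.log ((K:ℝ) - 1) - Real.log S))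
      = Real.log ((K:ℝ) - 1) - Real.log S := by
    field_simp
  rw [hid]
  ring
end

section
/- (Large-margin unified loss regularity) For parameters c ≥ 0 and a > 0, the function ℓ(z) = 1 - z for z < c/(1+c) and ℓ(z) = (1/(1+c))·[a/((1+c)z - c + a)]^a for z ≥ c/(1+c) is continuous, differentiable at z = c/(1+c) with derivative -1, convex on ℝ, and ℓ'(z) < 0 for all z. -/
/-- The large-margin unified loss with parameters `c ≥ 0`, `a > 0`. -/
noncomputable def lumLoss (c a z : ℝ) : ℝ :=
  if z < c / (1 + c) then 1 - z
  else (1 / (1 + c)) * (a / ((1 + c) * z - c + a)) ^ a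

/-- The (claimed) derivative of the LUM loss. -/
noncomputable def lumD (c a z : ℝ) : ℝ :=
  if z < c / (1 + c) then -1 else -((a / ((1 + c) * z - c + a)) ^ (a + 1))

theorem lum_u_ge (c a z : ℝ) (hc1 : (0:ℝ) < 1 + c) (hz : c / (1 + c) ≤ z) :
    a ≤ (1 + c) * z - c + a := by
  have h : c ≤ z * (1 + c) := (div_le_iff₀ hc1).mp hz
  nlinarith

theorem lum_eq_right (c a z : ℝ) (hz : c / (1 + c) ≤ z) :
    lumLoss c a z = (1 / (1 + c)) * (a / ((1 + c) * z - c + a)) ^ a := by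
  simp [lumLoss, not_lt.mpr hz]

theorem lum_u_t0 (c a : ℝ) (hc1 : (0:ℝ) < 1 + c) :
    (1 + c) * (c / (1 + c)) - c + a = a := by
  field_simp
  ring

theorem lum_eq_left (c a z : ℝ) (hc1 : (0:ℝ) < 1 + c) (ha : 0 < a)
    (hz : z ≤ c / (1 + c)) : lumLoss c a z = 1 - z := by
  rcases lt_or_eq_of_le hz with h | h
  · simp [lumLoss, h]
  · simp only [lumLoss, h, lt_irrefl, if_false]
    rw [lum_u_t0 c a hc1, div_self ha.ne', Real.one_rpow]
    field_simp
    ring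

theorem lumD_t0 (c a : ℝ) (hc1 : (0:ℝ) < 1 + c) (ha : 0 < a) :
    lumD c a (c / (1 + c)) = -1 := by
  simp only [lumD, lt_irrefl, if_false]
  rw [lum_u_t0 c a hc1, div_self ha.ne', Real.one_rpow]

/-- Derivative of the right branch of the LUM loss. -/
theorem lum_right_hasDerivAt (c a : ℝ) (hc1 : (0:ℝ) < 1 + c) (ha : 0 < a) (z : ℝ)
    (hz : 0 < (1 + c) * z - c + a) :
    HasDerivAt (fun z => (1 / (1 + c)) * (a / ((1 + c) * z - c + a)) ^ a)
      (-((a / ((1 + c) * z - c + a)) ^ (a + 1))) z := by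
  have hu' : HasDerivAt (fun z => (1 + c) * z - c + a) (1 + c) z := by
    have : HasDerivAt (fun z : ℝ => (1 + c) * z) ((1 + c) * 1) z :=
      (hasDerivAt_id z).const_mul (1 + c)
    simpa using (this.sub_const c).add_const a
  have hq : HasDerivAt (fun z => a / ((1 + c) * z - c + a))
      ((0 * ((1 + c) * z - c + a) - a * (1 + c)) / ((1 + c) * z - c + a) ^ 2) z :=
    (hasDerivAt_const z a).div hu' hz.ne'
  have hpos : 0 < a / ((1 + c) * z - c + a) := div_pos ha hz
  have hr := (hq.rpow_const (p := a) (Or.inl hpos.ne')).const_mul (1 / (1 + c))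
  refine hr.congr_deriv (Eq.symm ?_)
  have h2 : a + 1 = 2 + (a - 1) := by ring
  rw [h2, Real.rpow_add hpos, show (2:ℝ) = ((2:ℕ):ℝ) by norm_cast, Real.rpow_natCast]
  field_simp
  ring

theorem lum_hasDerivAt (c a : ℝ) (hc1 : (0:ℝ) < 1 + c) (ha : 0 < a) (z : ℝ) :
    HasDerivAt (lumLoss c a) (lumD c a z) z := by
  rcases lt_trichotomy z (c / (1 + c)) with h | h | h
  · have heq : lumLoss c a =ᶠ[nhds z] fun w => 1 - w := by
      filter_upwards [Iio_mem_nhds h] with w hw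
      exact lum_eq_left c a w hc1 ha (le_of_lt hw)
    have h1 : HasDerivAt (fun w : ℝ => 1 - w) (-1) z := by
      simpa using (hasDerivAt_id z).const_sub 1
    rw [lumD, if_pos h]
    exact h1.congr_of_eventuallyEq heq
  · have hleft : HasDerivWithinAt (lumLoss c a) (-1) (Set.Iic z) z := by
      have h1 : HasDerivWithinAt (fun w : ℝ => 1 - w) (-1) (Set.Iic z) z := by
        exact (by simpa using (hasDerivAt_id z).const_sub 1 :
          HasDerivAt (fun w : ℝ => 1 - w) (-1) z).hasDerivWithinAt
      refine h1.congr (fun w hw => ?_) ?_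
      · exact lum_eq_left c a w hc1 ha (le_trans hw h.le)
      · exact lum_eq_left c a z hc1 ha h.le
    have hright : HasDerivWithinAt (lumLoss c a) (-1) (Set.Ici z) z := by
      have hupos : (0:ℝ) < (1 + c) * z - c + a := by
        rw [h, lum_u_t0 c a hc1]; exact ha
      have hg := lum_right_hasDerivAt c a hc1 ha z hupos
      have hg1 : (-((a / ((1 + c) * z - c + a)) ^ (a + 1))) = -1 := by
        rw [h, lum_u_t0 c a hc1, div_self ha.ne', Real.one_rpow]
      rw [hg1] at hg
      refine hg.hasDerivWithinAt.congr (fun w hw => ?_) ?_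
      · exact lum_eq_right c a w (h ▸ (hw : z ≤ w))
      · exact lum_eq_right c a z h.ge
    have hcomb : HasDerivWithinAt (lumLoss c a) (-1) (Set.Iic z ∪ Set.Ici z) z :=
      hleft.union hright
    rw [Set.Iic_union_Ici, hasDerivWithinAt_univ] at hcomb
    rw [h] at hcomb ⊢
    rwa [lumD_t0 c a hc1 ha]
  · have heq : lumLoss c a =ᶠ[nhds z]
        fun w => (1 / (1 + c)) * (a / ((1 + c) * w - c + a)) ^ a := by
      filter_upwards [Ioi_mem_nhds h] with w hw
      exact lum_eq_right c a w (le_of_lt hw)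
    have hupos : (0:ℝ) < (1 + c) * z - c + a :=
      lt_of_lt_of_le ha (lum_u_ge c a z hc1 h.le)
    have hg := lum_right_hasDerivAt c a hc1 ha z hupos
    rw [lumD, if_neg (not_lt.mpr h.le)]
    exact hg.congr_of_eventuallyEq heq

/-- Regularity of the large-margin unified loss: it is continuous, differentiable
at `z = c/(1+c)` with derivative `-1`, convex, and has everywhere negative derivative. -/
theorem lumLoss_regularity (c a : ℝ) (hc : 0 ≤ c) (ha : 0 < a) :
    Continuous (lumLoss c a) ∧
    HasDerivAt (lumLoss c a) (-1) (c / (1 + c)) ∧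
    ConvexOn ℝ Set.univ (lumLoss c a) ∧
    (∀ z : ℝ, deriv (lumLoss c a) z < 0) := by
  have hc1 : (0:ℝ) < 1 + c := by linarith
  have hderiv := lum_hasDerivAt c a hc1 ha
  have hdiff : Differentiable ℝ (lumLoss c a) := fun z => (hderiv z).differentiableAt
  have hderiv_eq : ∀ z, deriv (lumLoss c a) z = lumD c a z := fun z => (hderiv z).deriv
  have hdneg : ∀ z, lumD c a z < 0 := by
    intro z
    rw [lumD]
    by_cases h : z < c / (1 + c)
    · simp [h]
    · simp only [if_neg h]
      have hz : a ≤ (1 + c) * z - c + a := lum_u_ge c a z hc1 (not_lt.mp h)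
      have : 0 < (a / ((1 + c) * z - c + a)) ^ (a + 1) :=
        Real.rpow_pos_of_pos (div_pos ha (lt_of_lt_of_le ha hz)) _
      linarith
  have hmono : Monotone (lumD c a) := by
    intro z1 z2 hz
    rw [lumD, lumD]
    by_cases h1 : z1 < c / (1 + c)
    · by_cases h2 : z2 < c / (1 + c)
      · simp [h1, h2]
      · simp only [if_pos h1, if_neg h2]
        have hz2 : a ≤ (1 + c) * z2 - c + a := lum_u_ge c a z2 hc1 (not_lt.mp h2)
        have hu2 : 0 < (1 + c) * z2 - c + a := lt_of_lt_of_le ha hz2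
        have hle1 : (a / ((1 + c) * z2 - c + a)) ^ (a + 1) ≤ 1 :=
          Real.rpow_le_one (div_nonneg ha.le hu2.le)
            ((div_le_one hu2).mpr hz2) (by linarith)
        linarith
    · have h2 : ¬ z2 < c / (1 + c) := fun hcon => h1 (lt_of_le_of_lt hz hcon)
      simp only [if_neg h1, if_neg h2]
      have hu1 : 0 < (1 + c) * z1 - c + a :=
        lt_of_lt_of_le ha (lum_u_ge c a z1 hc1 (not_lt.mp h1))
      have huu : (1 + c) * z1 - c + a ≤ (1 + c) * z2 - c + a := by nlinarith
      have hkey : (a / ((1 + c) * z2 - c + a)) ^ (a + 1)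
          ≤ (a / ((1 + c) * z1 - c + a)) ^ (a + 1) :=
        Real.rpow_le_rpow (div_nonneg ha.le (by linarith))
          (div_le_div_of_nonneg_left ha.le hu1 huu) (by linarith)
      linarith
  refine ⟨hdiff.continuous, ?_, ?_, ?_⟩
  · have := hderiv (c / (1 + c))
    rwa [lumD_t0 c a hc1 ha] at this
  · exact Monotone.convexOn_univ_of_deriv hdiff
      (fun x y hxy => by rw [hderiv_eq, hderiv_eq]; exact hmono hxy)
  · intro z; rw [hderiv_eq]; exact hdneg z
end
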